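/- Fix a real number N > 1 and D ∈ (0,π], and set ε := π − D. Let h be a CD(N−1,N) density on [0,D] with h(t) > 0 for all t ∈ (0,D). Then for every t ∈ (0,D) and every s > 0 with t + s ≤ D it holds h_N(t+s+ε)/h_N(t+ε) ≤ h(t+s)/h(t) ≤ h_N(t+s)/h_N(t). -/

import Mathlib

open Real MeasureTheory Set Filter

/-- `ω_N = ∫_0^π sin^{N-1}(t) dt`. -/
noncomputable def omegaN (N : ℝ) : ℝ := ∫ t in (0:ℝ)..π, Real.sin t ^ (N - 1)

/-- The model density `h_N(t) = sin^{N-1}(t)/ω_N`. -/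
noncomputable def hmodel (N t : ℝ) : ℝ := Real.sin t ^ (N - 1) / omegaN N

/-- `h` is a `CD(N-1,N)` density on `[0,D]`. -/
def IsCDDensity (N D : ℝ) (h : ℝ → ℝ) : Prop :=
  (∀ t ∈ Set.Icc (0:ℝ) D, 0 ≤ h t) ∧
  ∀ t₀ t₁ s : ℝ, 0 ≤ t₀ → t₀ ≤ t₁ → t₁ ≤ D → s ∈ Set.Icc (0:ℝ) 1 →
    Real.sin ((1 - s) * (t₁ - t₀)) * h t₀ ^ (1 / (N - 1))
      + Real.sin (s * (t₁ - t₀)) * h t₁ ^ (1 / (N - 1))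
    ≤ Real.sin (t₁ - t₀) * h ((1 - s) * t₀ + s * t₁) ^ (1 / (N - 1))

lemma omegaN_pos (N : ℝ) (hN1 : 1 < N) : 0 < omegaN N := by
  have hN0 : (0:ℝ) < N - 1 := by linarith
  rw [omegaN]
  apply intervalIntegral.intervalIntegral_pos_of_pos_on
  · exact (Real.continuous_sin.rpow_const fun x => Or.inr hN0.le).intervalIntegrable 0 π
  · intro x hx
    exact Real.rpow_pos_of_pos (Real.sin_pos_of_pos_of_lt_pi hx.1 hx.2) _
  · exact Real.pi_pos

/-- Lemma A.1 (Lemma `L:CD1estimates`): two-sided comparison of ratios of a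
`CD(N-1,N)` density with the model density. -/
theorem cd_density_ratio_estimates (N D : ℝ) (hN1 : 1 < N) (hD : D ∈ Set.Ioc (0:ℝ) π)
    (h : ℝ → ℝ) (hcd : IsCDDensity N D h) (hpos : ∀ t ∈ Set.Ioo (0:ℝ) D, 0 < h t)
    (t s : ℝ) (ht : t ∈ Set.Ioo (0:ℝ) D) (hs : 0 < s) (hts : t + s ≤ D) :
    hmodel N (t + s + (π - D)) / hmodel N (t + (π - D)) ≤ h (t + s) / h t ∧
    h (t + s) / h t ≤ hmodel N (t + s) / hmodel N t := by
  obtain ⟨hD0, hDπ⟩ := hD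
  obtain ⟨ht0, htD⟩ := ht
  obtain ⟨hnn, hccd⟩ := hcd
  have hN0 : (0:ℝ) < N - 1 := by linarith
  have hNne : N - 1 ≠ 0 := ne_of_gt hN0
  set f : ℝ → ℝ := fun x => h x ^ (1 / (N - 1)) with hf
  have hts0 : (0:ℝ) < t + s := by linarith
  have hsin_t : 0 < Real.sin t := Real.sin_pos_of_pos_of_lt_pi ht0 (by linarith)
  have hsin_ts : 0 ≤ Real.sin (t + s) :=
    Real.sin_nonneg_of_nonneg_of_le_pi (by linarith) (by linarith)
  have hsinDt : 0 < Real.sin (D - t) :=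
    Real.sin_pos_of_pos_of_lt_pi (by linarith) (by linarith)
  have hsinDts : 0 ≤ Real.sin (D - t - s) :=
    Real.sin_nonneg_of_nonneg_of_le_pi (by linarith) (by linarith)
  have hht : 0 < h t := hpos t ⟨ht0, htD⟩
  have hhts : 0 ≤ h (t + s) := hnn _ ⟨by linarith, hts⟩
  have hft : 0 < f t := Real.rpow_pos_of_pos hht _
  have hfts : 0 ≤ f (t + s) := Real.rpow_nonneg hhts _
  have homega : 0 < omegaN N := omegaN_pos N hN1
  have hsin_s : 0 ≤ Real.sin s :=
    Real.sin_nonneg_of_nonneg_of_le_pi hs.le (by linarith)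
  -- `f x ^ (N-1) = h x` for nonnegative `h x`
  have hrw : ∀ x : ℝ, 0 ≤ h x → f x ^ (N - 1) = h x := by
    intro x hx
    rw [hf]
    rw [← Real.rpow_mul hx, one_div, inv_mul_cancel₀ hNne, Real.rpow_one]
  -- ratio of model densities
  have hmr : ∀ a b : ℝ, hmodel N a / hmodel N b
      = Real.sin a ^ (N - 1) / Real.sin b ^ (N - 1) := by
    intro a b
    rw [hmodel, hmodel, div_div_div_comm, div_self (ne_of_gt homega), div_one]
  -- key inequality 1 (upper bound):  sin t * f(t+s) ≤ sin(t+s) * f t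
  have key1 : Real.sin t * f (t + s) ≤ Real.sin (t + s) * f t := by
    have H := hccd 0 (t + s) (t / (t + s)) le_rfl (by linarith) hts
      ⟨by positivity, by rw [div_le_one hts0]; linarith⟩
    have e1 : t / (t + s) * (t + s - 0) = t := by field_simp; ring
    have e2 : (1 - t / (t + s)) * (t + s - 0) = s := by field_simp; ring
    have e3 : (1 - t / (t + s)) * 0 + t / (t + s) * (t + s) = t := by field_simp; ring
    rw [e1, e2, e3, sub_zero] at H
    have h0 : 0 ≤ Real.sin s * f 0 :=
      mul_nonneg hsin_s (Real.rpow_nonneg (hnn 0 ⟨le_rfl, hD0.le⟩) _)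
    simp only [hf] at H h0 ⊢
    linarith
  -- key inequality 2 (lower bound): sin(D-t-s) * f t ≤ sin(D-t) * f(t+s)
  have key2 : Real.sin (D - t - s) * f t ≤ Real.sin (D - t) * f (t + s) := by
    have hDt : (0:ℝ) < D - t := by linarith
    have H := hccd t D (s / (D - t)) ht0.le (by linarith) le_rfl
      ⟨by positivity, by rw [div_le_one hDt]; linarith⟩
    have e1 : s / (D - t) * (D - t) = s := by field_simp
    have e2 : (1 - s / (D - t)) * (D - t) = D - t - s := by field_simp
    have e3 : (1 - s / (D - t)) * t + s / (D - t) * D = t + s := by field_simp; ring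
    rw [e1, e2, e3] at H
    have h0 : 0 ≤ Real.sin s * f D :=
      mul_nonneg hsin_s (Real.rpow_nonneg (hnn D ⟨hD0.le, le_rfl⟩) _)
    simp only [hf] at H h0 ⊢
    linarith
  constructor
  · -- lower bound
    have es1 : Real.sin (t + s + (π - D)) = Real.sin (D - t - s) := by
      rw [show t + s + (π - D) = π - (D - t - s) by ring, Real.sin_pi_sub]
    have es2 : Real.sin (t + (π - D)) = Real.sin (D - t) := by
      rw [show t + (π - D) = π - (D - t) by ring, Real.sin_pi_sub]
    rw [hmr, es1, es2, ← hrw _ hhts, ← hrw _ hht.le,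
      ← Real.div_rpow hsinDts hsinDt.le, ← Real.div_rpow hfts hft.le]
    apply Real.rpow_le_rpow (by positivity) _ hN0.le
    rw [div_le_div_iff₀ hsinDt hft]
    nlinarith [key2]
  · -- upper bound
    rw [hmr, ← hrw _ hhts, ← hrw _ hht.le,
      ← Real.div_rpow hsin_ts hsin_t.le, ← Real.div_rpow hfts hft.le]
    apply Real.rpow_le_rpow (by positivity) _ hN0.le
    rw [div_le_div_iff₀ hft hsin_t]
    nlinarith [key1]
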